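/- Let θ be a positive Borel measure on [-1,1] with infinitely many points of increase, let a_1,…,a_m ∈ [-1,1] with θ({a_k}) = 0, and let M_{k,i} ≥ 0 for i = 0,…,N_k−1 and M_{k,N_k} > 0 (k = 1,…,m). Let (q̂_n)_{n≥0} be the sequence of polynomials, deg q̂_n = n, with positive leading coefficients, orthonormal with respect to the Sobolev inner product ⟨f,g⟩ = ∫_{-1}^{1} f g dθ + Σ_{k=1}^{m} Σ_{i=0}^{N_k} M_{k,i} f^{(i)}(a_k) g^{(i)}(a_k). For each k set N*_k = N_k + 1 if N_k is odd and N*_k = N_k + 2 if N_k is even, let N = Σ_{k=1}^{m} N*_k, w_N(x) = Π_{k=1}^{m}(x − a_k)^{N*_k}, and π_{N+1}(x) = ∫_{-1}^{x} w_N(t) dt. Then there exist real coefficients d_{n,j} (with d_{n,s} = 0 for n = 0,1,…,s−1, and with the convention q̂_{-j} = 0 for j ≥ 1) such that for all n ∈ ℤ_+: π_{N+1}(x) q̂_n(x) = Σ_{j=0}^{N+1} d_{n+j,j} q̂_{n+j}(x) + Σ_{j=1}^{N+1} d_{n,j} q̂_{n−j}(x). -/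

import Mathlib

open MeasureTheory Filter

/-- `N*_k`: `N_k + 1` if `N_k` is odd, `N_k + 2` if `N_k` is even. -/
noncomputable def NStar (n : ℕ) : ℕ := if Odd n then n + 1 else n + 2

/-- The continuous-discrete Sobolev inner product
`⟨f,g⟩ = ∫_{-1}^1 f g dθ + Σ_k Σ_{i=0}^{N_k} M_{k,i} f^{(i)}(a_k) g^{(i)}(a_k)`. -/
noncomputable def sobolevInner {m : ℕ} (θ : Measure ℝ) (a : Fin m → ℝ)
    (Nk : Fin m → ℕ) (M : Fin m → ℕ → ℝ) (f g : ℝ → ℝ) : ℝ :=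
  (∫ x in Set.Icc (-1:ℝ) 1, f x * g x ∂θ) +
    ∑ k : Fin m, ∑ i ∈ Finset.range (Nk k + 1),
      M k i * iteratedDeriv i f (a k) * iteratedDeriv i g (a k)

open Polynomial

set_option linter.unusedSectionVars false


lemma polyIteratedDeriv (p : Polynomial ℝ) (i : ℕ) :
    iteratedDeriv i (fun y => p.eval y) = fun y => (derivative^[i] p).eval y := by
  induction i generalizing p with
  | zero => simp
  | succ i ih =>
    rw [iteratedDeriv_succ']
    have h : deriv (fun y => p.eval y) = fun y => (derivative p).eval y := by
      funext y; exact Polynomial.deriv (p := p)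
    rw [h, ih, Function.iterate_succ_apply]

lemma iterDerivAdd (p r : Polynomial ℝ) (i : ℕ) :
    derivative^[i] (p + r) = derivative^[i] p + derivative^[i] r := by
  induction i with
  | zero => rfl
  | succ i ih => rw [Function.iterate_succ_apply', Function.iterate_succ_apply',
      Function.iterate_succ_apply', ih, derivative_add]

lemma polyIntegrable (θ : Measure ℝ) [IsFiniteMeasure θ] (p : Polynomial ℝ) :
    IntegrableOn (fun x => p.eval x) (Set.Icc (-1:ℝ) 1) θ :=
  p.continuous.continuousOn.integrableOn_compact isCompact_Icc



noncomputable def Sp {m : ℕ} (θ : Measure ℝ) (a : Fin m → ℝ)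
    (Nk : Fin m → ℕ) (M : Fin m → ℕ → ℝ) (p r : Polynomial ℝ) : ℝ :=
  sobolevInner θ a Nk M (fun x => p.eval x) (fun x => r.eval x)

variable {m : ℕ} (θ : Measure ℝ) [IsFiniteMeasure θ] (a : Fin m → ℝ)
    (Nk : Fin m → ℕ) (M : Fin m → ℕ → ℝ)

lemma Sp_eq (p r : Polynomial ℝ) :
    Sp θ a Nk M p r = (∫ x in Set.Icc (-1:ℝ) 1, p.eval x * r.eval x ∂θ) +
      ∑ k : Fin m, ∑ i ∈ Finset.range (Nk k + 1),
        M k i * (derivative^[i] p).eval (a k) * (derivative^[i] r).eval (a k) := by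
  unfold Sp sobolevInner
  simp_rw [polyIteratedDeriv]

lemma Sp_comm (p r : Polynomial ℝ) : Sp θ a Nk M p r = Sp θ a Nk M r p := by
  rw [Sp_eq, Sp_eq]
  congr 1
  · congr 1; funext x; ring
  · refine Finset.sum_congr rfl fun k _ => Finset.sum_congr rfl fun i _ => by ring

lemma Sp_add (p p' r : Polynomial ℝ) :
    Sp θ a Nk M (p + p') r = Sp θ a Nk M p r + Sp θ a Nk M p' r := by
  rw [Sp_eq, Sp_eq, Sp_eq]
  have h1 : (∫ x in Set.Icc (-1:ℝ) 1, (p + p').eval x * r.eval x ∂θ)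
      = (∫ x in Set.Icc (-1:ℝ) 1, p.eval x * r.eval x ∂θ) +
        ∫ x in Set.Icc (-1:ℝ) 1, p'.eval x * r.eval x ∂θ := by
    have hi : ∀ u : Polynomial ℝ, IntegrableOn (fun x => u.eval x * r.eval x)
        (Set.Icc (-1:ℝ) 1) θ := fun u => by
      have := polyIntegrable θ (u * r)
      simpa [Polynomial.eval_mul] using this
    rw [← integral_add (hi p) (hi p')]
    simp [Polynomial.eval_add, add_mul]
  rw [h1]
  have h2 : ∀ k : Fin m, ∀ i ∈ Finset.range (Nk k + 1),
      M k i * (derivative^[i] (p + p')).eval (a k) * (derivative^[i] r).eval (a k)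
      = M k i * (derivative^[i] p).eval (a k) * (derivative^[i] r).eval (a k)
        + M k i * (derivative^[i] p').eval (a k) * (derivative^[i] r).eval (a k) := by
    intro k i _
    rw [iterDerivAdd, Polynomial.eval_add]; ring
  rw [Finset.sum_congr rfl fun k hk => Finset.sum_congr rfl (h2 k)]
  simp_rw [Finset.sum_add_distrib]
  ring

lemma Sp_smul (t : ℝ) (p r : Polynomial ℝ) :
    Sp θ a Nk M (t • p) r = t * Sp θ a Nk M p r := by
  rw [Sp_eq, Sp_eq]
  have h1 : (∫ x in Set.Icc (-1:ℝ) 1, (t • p).eval x * r.eval x ∂θ)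
      = t * ∫ x in Set.Icc (-1:ℝ) 1, p.eval x * r.eval x ∂θ := by
    rw [← integral_const_mul]
    congr 1; funext x; simp [Polynomial.eval_smul]; ring
  rw [h1, mul_add]
  congr 1
  rw [Finset.mul_sum]
  refine Finset.sum_congr rfl fun k _ => ?_
  rw [Finset.mul_sum]
  refine Finset.sum_congr rfl fun i _ => ?_
  rw [Polynomial.iterate_derivative_smul]
  simp [Polynomial.eval_smul]; ring

lemma Sp_zero (r : Polynomial ℝ) : Sp θ a Nk M 0 r = 0 := by
  have := Sp_smul θ a Nk M 0 0 r
  simpa using this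

lemma Sp_sum {ι : Type*} (s : Finset ι) (f : ι → Polynomial ℝ) (r : Polynomial ℝ) :
    Sp θ a Nk M (∑ i ∈ s, f i) r = ∑ i ∈ s, Sp θ a Nk M (f i) r := by
  classical
  induction s using Finset.induction_on with
  | empty => simpa using Sp_zero θ a Nk M r
  | insert _ _ hnotmem ih =>
    rw [Finset.sum_insert hnotmem, Finset.sum_insert hnotmem, Sp_add, ih]

lemma span_q (q : ℕ → Polynomial ℝ) (hdeg : ∀ n, (q n).natDegree = n)
    (hlead : ∀ n, 0 < (q n).leadingCoeff) :
    ∀ (D : ℕ) (p : Polynomial ℝ), p.natDegree ≤ D →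
      ∃ e : ℕ → ℝ, p = ∑ i ∈ Finset.range (D + 1), e i • q i := by
  intro D
  induction D with
  | zero =>
    intro p hp
    set l := (q 0).coeff 0 with hl0
    have hq0 : q 0 = C l := eq_C_of_natDegree_le_zero (hdeg 0).le
    have hl : l ≠ 0 := by
      have := hlead 0
      rw [Polynomial.leadingCoeff, hdeg 0] at this
      exact ne_of_gt this
    refine ⟨fun _ => p.coeff 0 / l, ?_⟩
    rw [Finset.sum_range_one, smul_eq_C_mul]
    conv_rhs => rw [hq0, ← C_mul]
    rw [div_mul_cancel₀ _ hl]
    exact eq_C_of_natDegree_le_zero hp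
  | succ D ih =>
    intro p hp
    set lq := (q (D + 1)).coeff (D + 1) with hlq
    have hl : lq ≠ 0 := by
      have := hlead (D + 1)
      rw [Polynomial.leadingCoeff, hdeg (D + 1)] at this
      exact ne_of_gt this
    set t := p.coeff (D + 1) / lq with ht
    have hr : (p - t • q (D + 1)).natDegree ≤ D := by
      rw [natDegree_le_iff_coeff_eq_zero]
      intro NN hNN
      rw [Polynomial.coeff_sub, Polynomial.coeff_smul, smul_eq_mul]
      rcases eq_or_lt_of_le (Nat.succ_le_of_lt hNN) with h | h
      · rw [← h, ht, div_mul_cancel₀ _ hl, sub_self]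
      · rw [Polynomial.coeff_eq_zero_of_natDegree_lt (lt_of_le_of_lt hp h),
          Polynomial.coeff_eq_zero_of_natDegree_lt (by rw [hdeg]; exact h),
          mul_zero, sub_zero]
    obtain ⟨e, he⟩ := ih _ hr
    refine ⟨fun i => if i = D + 1 then t else e i, ?_⟩
    rw [Finset.sum_range_succ]
    beta_reduce
    rw [if_pos rfl]
    have h2 : ∑ i ∈ Finset.range (D + 1), (if i = D + 1 then t else e i) • q i
        = ∑ i ∈ Finset.range (D + 1), e i • q i := by
      refine Finset.sum_congr rfl fun i hi => ?_
      have : i ≠ D + 1 := by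
        have := Finset.mem_range.mp hi; omega
      rw [if_neg this]
    rw [h2, ← he]
    ring

lemma Sp_expansion_coeff (q : ℕ → Polynomial ℝ)
    (horthS : ∀ n n', Sp θ a Nk M (q n) (q n') = if n = n' then 1 else 0)
    (e : ℕ → ℝ) (D j : ℕ) :
    Sp θ a Nk M (∑ i ∈ Finset.range D, e i • q i) (q j)
      = if j ∈ Finset.range D then e j else 0 := by
  rw [Sp_sum]
  have h : ∀ i ∈ Finset.range D, Sp θ a Nk M (e i • q i) (q j)
      = if i = j then e i else 0 := by
    intro i _
    rw [Sp_smul, horthS]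
    split_ifs <;> simp
  rw [Finset.sum_congr rfl h, Finset.sum_ite_eq' (Finset.range D) j e]

noncomputable def antider (W : Polynomial ℝ) : Polynomial ℝ :=
  W.sum fun n c => C (c / (n + 1)) * X ^ (n + 1)

lemma derivative_antider (W : Polynomial ℝ) : derivative (antider W) = W := by
  unfold antider Polynomial.sum
  rw [derivative_sum]
  have h : ∀ n ∈ W.support, derivative (C (W.coeff n / (n + 1)) * X ^ (n + 1))
      = C (W.coeff n) * X ^ n := by
    intro n _
    rw [derivative_C_mul, derivative_X_pow, Nat.add_sub_cancel, ← mul_assoc, ← C_mul]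
    congr 1
    push_cast
    rw [div_mul_cancel₀]
    positivity
  rw [Finset.sum_congr rfl h]
  exact Polynomial.sum_C_mul_X_pow_eq W

lemma natDegree_antider_le (W : Polynomial ℝ) :
    (antider W).natDegree ≤ W.natDegree + 1 := by
  unfold antider Polynomial.sum
  refine natDegree_sum_le_of_forall_le _ _ fun n hn => ?_
  exact (natDegree_C_mul_X_pow_le _ _).trans
    (Nat.succ_le_succ (Polynomial.le_natDegree_of_mem_supp n hn))

lemma eval_iterate_derivative_eq_zero {W : Polynomial ℝ} {b : ℝ} {s j : ℕ}
    (hdvd : (X - C b) ^ s ∣ W) (hj : j < s) :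
    (derivative^[j] W).eval b = 0 := by
  obtain ⟨u, hu⟩ := Polynomial.pow_sub_dvd_iterate_derivative_of_pow_dvd j hdvd
  rw [hu, Polynomial.eval_mul, Polynomial.eval_pow, Polynomial.eval_sub,
    Polynomial.eval_X, Polynomial.eval_C, sub_self, zero_pow (by omega), zero_mul]

lemma eval_iterate_derivative_mul_of_van (pp u : Polynomial ℝ) (b : ℝ) (i : ℕ)
    (hvan : ∀ r, 1 ≤ r → r ≤ i → (derivative^[r] pp).eval b = 0) :
    (derivative^[i] (pp * u)).eval b = pp.eval b * (derivative^[i] u).eval b := by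
  rw [Polynomial.iterate_derivative_mul, Polynomial.eval_finset_sum]
  rw [Finset.sum_eq_single i]
  · rw [Nat.sub_self, Nat.choose_self, one_smul, Function.iterate_zero_apply,
      Polynomial.eval_mul]
  · intro r hr hne
    have hlt : r < i := lt_of_le_of_ne (Nat.lt_succ_iff.mp (Finset.mem_range.mp hr)) hne
    rw [Polynomial.eval_smul, Polynomial.eval_mul, hvan (i - r) (by omega) (by omega)]
    simp
  · intro h; exact absurd (Finset.self_mem_range_succ i) h



/-- **(N+2)-term recurrence for continuous-discrete Sobolev orthonormal polynomials.**
Let `θ` be a positive Borel measure on `[-1,1]` with infinitely many points of increase,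
mass points `a₁,…,a_m ∈ [-1,1]` with `θ({a_k}) = 0`, weights `M_{k,i} ≥ 0` for `i < N_k`,
`M_{k,N_k} > 0`, and let `q̂_n` be the Sobolev orthonormal polynomials (degree `n`, positive
leading coefficient). With `N*_k = N_k + 1` (`N_k` odd) or `N_k + 2` (`N_k` even),
`N = Σ N*_k`, `w_N(x) = Π (x - a_k)^{N*_k}` and `π_{N+1}(x) = ∫_{-1}^x w_N(t) dt`, there exist
coefficients `d_{n,j}` (with `d_{n,s} = 0` for `n < s`, and `q̂_{-j} = 0`) such that
`π_{N+1}(x) q̂_n(x) = Σ_{j=0}^{N+1} d_{n+j,j} q̂_{n+j}(x) + Σ_{j=1}^{N+1} d_{n,j} q̂_{n-j}(x)`. -/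
theorem sobolev_recurrence_exists
    {m : ℕ} (θ : Measure ℝ) [IsFiniteMeasure θ]
    (a : Fin m → ℝ) (Nk : Fin m → ℕ) (M : Fin m → ℕ → ℝ)
    (ha : ∀ k, a k ∈ Set.Icc (-1:ℝ) 1)
    (hθsupp : θ (Set.Icc (-1:ℝ) 1)ᶜ = 0)
    (hθinc : {x : ℝ | ∀ ε > 0, 0 < θ (Set.Ioo (x - ε) (x + ε))}.Infinite)
    (hθa : ∀ k, θ {a k} = 0)
    (hM0 : ∀ k, ∀ i < Nk k, 0 ≤ M k i)
    (hMN : ∀ k, 0 < M k (Nk k))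
    (q : ℕ → Polynomial ℝ)
    (hdeg : ∀ n, (q n).natDegree = n)
    (hlead : ∀ n, 0 < (q n).leadingCoeff)
    (horth : ∀ n n', sobolevInner θ a Nk M (fun x => (q n).eval x) (fun x => (q n').eval x)
      = if n = n' then 1 else 0) :
    ∃ d : ℕ → ℕ → ℝ, (∀ n s, n < s → d n s = 0) ∧
      ∀ (n : ℕ) (x : ℝ),
        (∫ t in (-1:ℝ)..x, ∏ k : Fin m, (t - a k) ^ NStar (Nk k)) * (q n).eval x =
          (∑ j ∈ Finset.range ((∑ k : Fin m, NStar (Nk k)) + 2),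
            d (n + j) j * (q (n + j)).eval x) +
          ∑ j ∈ Finset.Icc 1 ((∑ k : Fin m, NStar (Nk k)) + 1),
            d n j * (if j ≤ n then (q (n - j)).eval x else 0) := by
  classical
  set N : ℕ := ∑ k : Fin m, NStar (Nk k) with hN
  set W : Polynomial ℝ := ∏ k : Fin m, (X - C (a k)) ^ NStar (Nk k) with hW
  set A : Polynomial ℝ := antider W with hA
  set p1 : Polynomial ℝ := A - C (A.eval (-1)) with hp1
  -- the interval integral is `p1.eval x`
  have hint : ∀ x : ℝ,
      (∫ t in (-1:ℝ)..x, ∏ k : Fin m, (t - a k) ^ NStar (Nk k)) = p1.eval x := by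
    intro x
    have h1 : (∫ t in (-1:ℝ)..x, ∏ k : Fin m, (t - a k) ^ NStar (Nk k))
        = ∫ t in (-1:ℝ)..x, W.eval t := by
      congr 1
      funext t
      rw [hW]
      simp [Polynomial.eval_prod]
    have hd : ∀ t ∈ Set.uIcc (-1:ℝ) x, HasDerivAt (fun y => A.eval y) (W.eval t) t := by
      intro t _
      have h2 := A.hasDerivAt t
      rwa [show Polynomial.derivative A = W from derivative_antider W] at h2
    rw [h1, intervalIntegral.integral_eq_sub_of_hasDerivAt hd
      (W.continuous.intervalIntegrable _ _), hp1]
    simp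
  have hWdeg : W.natDegree ≤ N := by
    rw [hW, hN]
    refine (Polynomial.natDegree_prod_le _ _).trans ?_
    refine Finset.sum_le_sum fun k _ => ?_
    rw [Polynomial.natDegree_pow, Polynomial.natDegree_X_sub_C, mul_one]
  have hp1deg : p1.natDegree ≤ N + 1 := by
    rw [hp1]
    refine (Polynomial.natDegree_sub_le _ _).trans ?_
    simp only [Polynomial.natDegree_C, max_le_iff]
    exact ⟨(natDegree_antider_le W).trans (by omega), by omega⟩
  have hvan : ∀ k : Fin m, ∀ r, 1 ≤ r → r ≤ Nk k →
      (Polynomial.derivative^[r] p1).eval (a k) = 0 := by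
    intro k r h1 h2
    obtain ⟨j, rfl⟩ : ∃ j, r = j + 1 := ⟨r - 1, by omega⟩
    rw [Function.iterate_succ_apply]
    have hdp1 : Polynomial.derivative p1 = W := by
      rw [hp1, Polynomial.derivative_sub, Polynomial.derivative_C, sub_zero,
        derivative_antider]
    rw [hdp1]
    have hdvd : (X - C (a k)) ^ NStar (Nk k) ∣ W := by
      rw [hW]
      exact Finset.dvd_prod_of_mem _ (Finset.mem_univ k)
    refine eval_iterate_derivative_eq_zero hdvd ?_
    have : Nk k + 1 ≤ NStar (Nk k) := by unfold NStar; split_ifs <;> omega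
    omega
  have horthS : ∀ n n', Sp θ a Nk M (q n) (q n') = if n = n' then 1 else 0 :=
    fun n n' => horth n n'
  have hmul : ∀ u v : Polynomial ℝ,
      Sp θ a Nk M (p1 * u) v = Sp θ a Nk M u (p1 * v) := by
    intro u v
    rw [Sp_eq, Sp_eq]
    congr 1
    · congr 1
      funext x
      rw [Polynomial.eval_mul, Polynomial.eval_mul]
      ring
    · refine Finset.sum_congr rfl fun k _ => Finset.sum_congr rfl fun i hi => ?_
      have hi' : i ≤ Nk k := Nat.lt_succ_iff.mp (Finset.mem_range.mp hi)
      rw [eval_iterate_derivative_mul_of_van p1 u (a k) i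
          (fun r hr1 hr2 => hvan k r hr1 (hr2.trans hi')),
        eval_iterate_derivative_mul_of_van p1 v (a k) i
          (fun r hr1 hr2 => hvan k r hr1 (hr2.trans hi'))]
      ring
  set c : ℕ → ℕ → ℝ := fun n p => Sp θ a Nk M (p1 * q n) (q p) with hc
  have key : ∀ n : ℕ, (p1 * q n = ∑ p ∈ Finset.range (n + N + 2), c n p • q p) ∧
      (∀ p, n + N + 2 ≤ p → c n p = 0) := by
    intro n
    have hdeg' : (p1 * q n).natDegree ≤ n + N + 1 := by
      refine Polynomial.natDegree_mul_le.trans ?_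
      rw [hdeg n]
      omega
    obtain ⟨e, he⟩ := span_q q hdeg hlead (n + N + 1) _ hdeg'
    have hcoeff : ∀ p, c n p = if p ∈ Finset.range (n + N + 2) then e p else 0 := by
      intro p
      rw [hc]
      simp only []
      rw [he]
      exact Sp_expansion_coeff θ a Nk M q horthS e _ p
    constructor
    · rw [he]
      refine Finset.sum_congr rfl fun p hp => ?_
      rw [hcoeff p, if_pos hp]
    · intro p hp
      rw [hcoeff p, if_neg (by simp only [Finset.mem_range]; omega)]
  have hsym : ∀ n p, c n p = c p n := by
    intro n p
    rw [hc]
    simp only []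
    rw [hmul (q n) (q p), Sp_comm]
  refine ⟨fun n j => if j ≤ n then c n (n - j) else 0, fun n s hlt => if_neg (by omega), ?_⟩
  intro n x
  rw [hint x, show p1.eval x * (q n).eval x = ((p1 * q n)).eval x from
    (Polynomial.eval_mul ..).symm, (key n).1, Polynomial.eval_finset_sum]
  simp_rw [Polynomial.eval_smul, smul_eq_mul]
  have hsplit : ∑ p ∈ Finset.range (n + N + 2), c n p * (q p).eval x
      = (∑ p ∈ Finset.range n, c n p * (q p).eval x)
        + ∑ j ∈ Finset.range (N + 2), c n (n + j) * (q (n + j)).eval x := by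
    rw [Finset.range_eq_Ico,
      ← Finset.sum_Ico_consecutive _ (Nat.zero_le n) (by omega : n ≤ n + N + 2)]
    congr 1
    · rw [Finset.range_eq_Ico]
    simp only [Finset.sum_Ico_eq_sum_range]
    rw [show n + N + 2 - n = N + 2 - 0 from by omega]
    simp
  rw [hsplit]
  rw [add_comm]
  congr 1
  · -- upper part
    refine Finset.sum_congr rfl fun j _ => ?_
    have h1 : j ≤ n + j := Nat.le_add_left j n
    rw [if_pos h1, show n + j - j = n from by omega, ← hsym n (n + j)]
  · -- lower part
    set F : ℕ → ℝ := fun j =>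
      if j ≤ n then c n (n - j) * (q (n - j)).eval x else 0 with hF
    have hstep1 : ∑ j ∈ Finset.Icc 1 (N + 1),
        (if j ≤ n then c n (n - j) else 0) * (if j ≤ n then (q (n - j)).eval x else 0)
        = ∑ j ∈ Finset.Icc 1 (N + 1), F j := by
      refine Finset.sum_congr rfl fun j _ => ?_
      simp only [hF]
      split_ifs <;> simp
    have hstep2 : ∑ p ∈ Finset.range n, c n p * (q p).eval x
        = ∑ j ∈ Finset.Icc 1 n, F j := by
      refine Finset.sum_nbij' (fun p => n - p) (fun j => n - j) ?_ ?_ ?_ ?_ ?_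
      · intro p hp
        simp only [Finset.mem_range] at hp
        simp only [Finset.mem_Icc]
        omega
      · intro j hj
        simp only [Finset.mem_Icc] at hj
        simp only [Finset.mem_range]
        omega
      · intro p hp
        simp only [Finset.mem_range] at hp
        beta_reduce
        omega
      · intro j hj
        simp only [Finset.mem_Icc] at hj
        beta_reduce
        omega
      · intro p hp
        simp only [Finset.mem_range] at hp
        simp only [hF]
        rw [if_pos (by omega : n - p ≤ n), show n - (n - p) = p from by omega]
    have hvanish : ∀ j, n + 1 ≤ j → F j = 0 := by
      intro j hj
      rw [hF]
      exact if_neg (by omega)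
    have hvanish2 : ∀ j, N + 2 ≤ j → F j = 0 := by
      intro j hj
      simp only [hF]
      split_ifs with h
      · rw [hsym n (n - j), (key (n - j)).2 n (by omega), zero_mul]
      · rfl
    have hbig : ∀ (b : ℕ), b ≤ max n (N + 1) →
        (∀ j, b + 1 ≤ j → F j = 0) →
        ∑ j ∈ Finset.Icc 1 b, F j = ∑ j ∈ Finset.Icc 1 (max n (N + 1)), F j := by
      intro b hb hz
      refine Finset.sum_subset (Finset.Icc_subset_Icc_right hb) ?_
      intro j hjmem hjnot
      simp only [Finset.mem_Icc] at hjmem hjnot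
      exact hz j (by omega)
    rw [hstep2, hbig n (le_max_left _ _) hvanish,
      ← hbig (N + 1) (le_max_right _ _) hvanish2, ← hstep1]
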